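/- Let r > 0 be a real number and n ≥ 2 an integer, and define η_n > 0 by cosh η_n := 1 + 2(sinh(r/4) · sin(π/n))². Then for every j = 1, …, n−1, one has ‖a(r/8)⁻¹ · k(jπ/n) · a(r/8)‖ ≥ η_n; equivalently, the sum of the squares of the entries of the matrix a(r/8)⁻¹ k(jπ/n) a(r/8) is at least 2(1 + 2(sinh(r/4) sin(π/n))²). -/

import Mathlib

open Real

noncomputable section

abbrev SL2 := Matrix.SpecialLinearGroup (Fin 2) ℝ

/-- inverse hyperbolic cosine -/
def acosh (x : ℝ) : ℝ := Real.log (x + Real.sqrt (x ^ 2 - 1))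

/-- the "pseudo-distance from the origin" ‖g‖ = arcosh((g₁₁²+g₁₂²+g₂₁²+g₂₂²)/2) -/
def gnorm (g : SL2) : ℝ :=
  acosh ((g.1 0 0 ^ 2 + g.1 0 1 ^ 2 + g.1 1 0 ^ 2 + g.1 1 1 ^ 2) / 2)

def z1 (x : SL2) : ℂ :=
  (((x.1 0 0 + x.1 1 1 : ℝ) : ℂ) + Complex.I * ((x.1 1 0 - x.1 0 1 : ℝ) : ℂ)) / 2

def z2 (x : SL2) : ℂ :=
  (((x.1 0 1 + x.1 1 0 : ℝ) : ℂ) + Complex.I * ((x.1 0 0 - x.1 1 1 : ℝ) : ℂ)) / 2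

/-- the spherical function ψ_{m,k}(x) = z₁(x)^{-(k+2m)} z₂(x)^k -/
def psi (m k : ℕ) (x : SL2) : ℂ := z1 x ^ (-(k + 2 * m : ℤ)) * z2 x ^ k

/-- γ is central iff both components are ±1 -/
def IsCentral (γ : SL2 × SL2) : Prop :=
  (γ.1.1 = 1 ∨ γ.1.1 = -1) ∧ (γ.2.1 = 1 ∨ γ.2.1 = -1)

/-- ε_Γ -/
def epsGamma (Γ : Set (SL2 × SL2)) : ℝ :=
  (1 / 3) * sInf {r | ∃ γ ∈ Γ, ¬IsCentral γ ∧ r = |gnorm γ.1 - gnorm γ.2|}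

/-- the set counted by N_Γ(x,R) -/
def orbitSet (Γ : Set (SL2 × SL2)) (x : SL2) (R : ℝ) : Set (SL2 × SL2) :=
  {γ | γ ∈ Γ ∧ gnorm (γ.1 * x * γ.2⁻¹) ≤ R}

/-- the constant m(C,α,ε,s) -/
def mConst (C α ε : ℝ) (s : ℕ) : ℝ :=
  (Real.log 2 * s + 2 * α * ε + Real.log (1 + 2 ^ s * C * Real.exp (6 * α * ε))) /
    Real.log (Real.cosh ε)

def chi (x : ℝ) : ℝ := if x = 1 then 0 else 1

/-- θ_{a,N} for a tuple a of length k (with the convention a_{-1} = 1) -/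
def thetaAN (a : ℕ → ℝ) (k : ℕ) (N : ℝ) : ℝ :=
  Real.pi * ∑ i ∈ Finset.range k,
    (chi (a i) - if i = 0 then 0 else chi (a (i - 1))) * N ^ (-(i : ℤ))

/-- the sign tuple a(b) attached to b -/
def signOf (b : ℕ → ℝ) (j : ℕ) : ℝ := if 0 ≤ b j then 1 else -1

/-- ψ_{m,b} = Σ_{j<k} b_j ψ_{m,3^j} -/
def psiB (m k : ℕ) (b : ℕ → ℝ) (x : SL2) : ℂ :=
  ∑ j ∈ Finset.range k, (b j : ℂ) * psi m (3 ^ j) x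

/-- f_b(u) = Σ_{j<k} b_j cos(3^j θ_{a(b),3}) u^{3^j} -/
def fb (k : ℕ) (b : ℕ → ℝ) (u : ℝ) : ℝ :=
  ∑ j ∈ Finset.range k, b j * Real.cos (3 ^ j * thetaAN (signOf b) k 3) * u ^ 3 ^ j

/-- the rotation matrix k(θ) -/
def kMat (θ : ℝ) : SL2 :=
  ⟨!![Real.cos θ, -Real.sin θ; Real.sin θ, Real.cos θ], by
    simp [Matrix.det_fin_two_of]
    nlinarith [Real.sin_sq_add_cos_sq θ]⟩

/-- the diagonal matrix a(t) -/
def aMat (t : ℝ) : SL2 :=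
  ⟨!![Real.exp t, 0; 0, Real.exp (-t)], by
    simp [Matrix.det_fin_two_of, ← Real.exp_add]⟩

end

lemma acosh_mono' {x y : ℝ} (hx : 1 ≤ x) (hxy : x ≤ y) : acosh x ≤ acosh y := by
  unfold acosh
  have h1 : Real.sqrt (x^2-1) ≤ Real.sqrt (y^2-1) := Real.sqrt_le_sqrt (by nlinarith)
  exact Real.log_le_log (by nlinarith [Real.sqrt_nonneg (x^2-1)]) (by linarith)

lemma aMat_inv' (t : ℝ) : (aMat t)⁻¹ = aMat (-t) := by
  rw [inv_eq_iff_mul_eq_one]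
  ext i j
  change ((aMat t).1 * (aMat (-t)).1) i j = (1 : SL2).1 i j
  fin_cases i <;> fin_cases j <;>
    simp [aMat, Matrix.SpecialLinearGroup.coe_mul, Matrix.mul_apply, Fin.sum_univ_two,
      ← Real.exp_add]

lemma gnorm_conj (t θ : ℝ) :
    gnorm ((aMat t)⁻¹ * kMat θ * aMat t) =
      acosh (1 + 2 * (Real.sinh (2*t) * Real.sin θ) ^ 2) := by
  rw [aMat_inv']
  unfold gnorm
  congr 1
  have e1 : ((aMat (-t) * kMat θ * aMat t).1 : Matrix (Fin 2) (Fin 2) ℝ) =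
      (aMat (-t)).1 * (kMat θ).1 * (aMat t).1 := by simp
  rw [e1]
  simp [aMat, kMat, Matrix.mul_apply, Fin.sum_univ_two, Real.sinh_eq, Real.exp_add,
    ← Real.exp_nat_mul]
  have hc := Real.sin_sq_add_cos_sq θ
  have he : Real.exp t * Real.exp (-t) = 1 := by rw [← Real.exp_add]; simp
  have h2 : Real.exp (t*2) = Real.exp t ^ 2 := by rw [sq, ← Real.exp_add]; ring_nf
  have h3 : Real.exp (-(t*2)) = Real.exp (-t) ^ 2 := by rw [sq, ← Real.exp_add]; ring_nf
  ring_nf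
  rw [h2, h3]
  have he2 : Real.exp t ^ 2 * Real.exp (-t) ^ 2 = 1 := by rw [← mul_pow, he]; norm_num
  nlinarith [he2, hc]

lemma sin_ge_sin_alpha {n j : ℕ} (hn : 2 ≤ n) (hj1 : 1 ≤ j) (hj2 : j ≤ n - 1) :
    Real.sin (Real.pi / n) ≤ Real.sin (j * Real.pi / n) := by
  have hn0 : (0:ℝ) < n := by positivity
  have hpi := Real.pi_pos
  have hα : (0:ℝ) < Real.pi / n := by positivity
  have hα2 : Real.pi / n ≤ Real.pi / 2 := by
    apply div_le_div_of_nonneg_left hpi.le (by norm_num)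
    exact_mod_cast hn
  have hjn : (j:ℝ) + 1 ≤ n := by
    have : j + 1 ≤ n := by omega
    exact_mod_cast this
  have hj1' : (1:ℝ) ≤ j := by exact_mod_cast hj1
  have hθl : Real.pi / n ≤ j * Real.pi / n := by
    rw [div_le_div_iff₀ hn0 hn0]
    nlinarith [mul_nonneg (mul_nonneg (by linarith : (0:ℝ) ≤ (j:ℝ) - 1) hpi.le) hn0.le]
  have hθu : (j:ℝ) * Real.pi / n + Real.pi / n ≤ Real.pi := by
    rw [← add_div, div_le_iff₀ hn0]; nlinarith
  rcases le_or_gt ((j:ℝ) * Real.pi / n) (Real.pi / 2) with h | h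
  · exact Real.strictMonoOn_sin.monotoneOn
      ⟨by linarith, by linarith⟩ ⟨by linarith, h⟩ hθl
  · have h2 := Real.strictMonoOn_sin.monotoneOn
      (a := Real.pi / n) (b := Real.pi - (j:ℝ) * Real.pi / n)
      ⟨by linarith, by linarith⟩ ⟨by linarith, by linarith⟩ (by linarith)
    rwa [Real.sin_pi_sub] at h2

theorem stmt16 (r : ℝ) (hr : 0 < r) (n : ℕ) (hn : 2 ≤ n) :
    ∀ j : ℕ, 1 ≤ j → j ≤ n - 1 →
      acosh (1 + 2 * (Real.sinh (r / 4) * Real.sin (Real.pi / n)) ^ 2) ≤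
        gnorm ((aMat (r / 8))⁻¹ * kMat (j * Real.pi / n) * aMat (r / 8)) := by
  intro j hj1 hj2
  have key := gnorm_conj (r/8) (j * Real.pi / n)
  have h8 : 2 * (r/8) = r/4 := by ring
  rw [h8] at key
  rw [key]
  apply acosh_mono'
  · nlinarith [sq_nonneg (Real.sinh (r/4) * Real.sin (Real.pi / n))]
  · have hs := sin_ge_sin_alpha hn hj1 hj2
    have hsn : 0 ≤ Real.sin (Real.pi / n) := by
      apply Real.sin_nonneg_of_nonneg_of_le_pi
      · positivity
      · have : (1:ℝ) ≤ n := by exact_mod_cast le_trans (by norm_num) hn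
        rw [div_le_iff₀ (by positivity)]
        nlinarith [Real.pi_pos]
    have hsq : Real.sin (Real.pi / n) ^ 2 ≤ Real.sin ((j:ℝ) * Real.pi / n) ^ 2 :=
      pow_le_pow_left₀ hsn hs 2
    nlinarith [sq_nonneg (Real.sinh (r/4)), hsq]
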